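/- Deterministic stochastic-approximation contraction: suppose Δ_{t+1} = (1−α_t)Δ_t + α_t F_t in ℝ, with 0 ≤ α_t ≤ 1, Σ_t α_t = ∞, |F_t| ≤ γ|Δ_t| + c_t where 0 ≤ γ < 1 and c_t → 0, and suppose additionally that the Δ_t are uniformly bounded. Then Δ_t → 0. -/

import Mathlib

open Filter

lemma sa_step_aux (Δ F α c : ℕ → ℝ) (γ : ℝ)
    (hrec : ∀ t, Δ (t + 1) = (1 - α t) * Δ t + α t * F t)
    (hα0 : ∀ t, 0 ≤ α t) (hα1 : ∀ t, α t ≤ 1)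
    (hαdiv : Tendsto (fun T => ∑ t ∈ Finset.range T, α t) atTop atTop)
    (hγ0 : 0 ≤ γ)
    (hF : ∀ t, |F t| ≤ γ * |Δ t| + c t)
    (hc : Tendsto c atTop (nhds 0))
    (D : ℝ) (hD : ∀ᶠ t in atTop, |Δ t| ≤ D)
    {ε : ℝ} (hε : 0 < ε) :
    ∀ᶠ t in atTop, |Δ t| ≤ γ * D + ε := by
  obtain ⟨N1, hN1⟩ := eventually_atTop.mp hD
  obtain ⟨N2, hN2⟩ := eventually_atTop.mp
    (hc.eventually_lt_const (by linarith : (0:ℝ) < ε / 2))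
  set N := max N1 N2 with hN
  set M := γ * D + ε / 2 with hM
  set R := max (|Δ N| - M) 0 with hR
  have hR0 : 0 ≤ R := le_max_right _ _
  set P := fun k => ∏ i ∈ Finset.range k, (1 - α (N + i)) with hP
  clear_value N M R P
  have hP0 : ∀ k, 0 ≤ P k := by
    intro k
    rw [hP]
    exact Finset.prod_nonneg fun i _ => by linarith [hα1 (N + i)]
  have claimA : ∀ k, |Δ (N + k)| ≤ M + P k * R := by
    intro k
    induction k with
    | zero =>
      have h := le_max_left (|Δ N| - M) 0
      simp only [hP, Finset.range_zero, Finset.prod_empty, Nat.add_zero, one_mul]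
      linarith
    | succ k ih =>
      have ha0 := hα0 (N + k)
      have ha1 := hα1 (N + k)
      have hD' : |Δ (N + k)| ≤ D := hN1 _ (by omega)
      have hcN : c (N + k) < ε / 2 := hN2 _ (by omega)
      have hFb : |F (N + k)| ≤ M := by
        have h1 := hF (N + k)
        have h2 : γ * |Δ (N+k)| ≤ γ * D := mul_le_mul_of_nonneg_left hD' hγ0
        linarith
      have hstep : |Δ (N + (k+1))| ≤ (1 - α (N+k)) * |Δ (N+k)| + α (N+k) * |F (N+k)| := by
        have hr := hrec (N + k)
        rw [show N + (k+1) = (N + k) + 1 by ring, hr]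
        calc |(1 - α (N+k)) * Δ (N+k) + α (N+k) * F (N+k)|
            ≤ |(1 - α (N+k)) * Δ (N+k)| + |α (N+k) * F (N+k)| := abs_add_le _ _
          _ = (1 - α (N+k)) * |Δ (N+k)| + α (N+k) * |F (N+k)| := by
              rw [abs_mul, abs_mul, abs_of_nonneg (by linarith), abs_of_nonneg ha0]
      have hPk : P (k+1) = P k * (1 - α (N+k)) := by
        simp only [hP]; exact Finset.prod_range_succ _ _
      have hPk0 := hP0 k
      calc |Δ (N + (k+1))| ≤ (1 - α (N+k)) * |Δ (N+k)| + α (N+k) * |F (N+k)| := hstep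
        _ ≤ (1 - α (N+k)) * (M + P k * R) + α (N+k) * M := by
            apply add_le_add
            · exact mul_le_mul_of_nonneg_left ih (by linarith)
            · exact mul_le_mul_of_nonneg_left hFb ha0
        _ = M + P (k+1) * R := by rw [hPk]; ring
  have hSum : Tendsto (fun k => ∑ i ∈ Finset.range k, α (N + i)) atTop atTop := by
    have h1 : Tendsto (fun k => ∑ t ∈ Finset.range (N + k), α t) atTop atTop := by
      have := hαdiv.comp (tendsto_add_atTop_nat N)
      exact this.congr (fun k => by simp only [Function.comp_apply, Nat.add_comm k N])
    have h2 : ∀ k, ∑ t ∈ Finset.range (N + k), α t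
        = (∑ t ∈ Finset.range N, α t) + ∑ i ∈ Finset.range k, α (N + i) := by
      intro k; rw [Finset.sum_range_add]
    simp only [h2] at h1
    simpa using tendsto_atTop_add_const_left _ (-(∑ t ∈ Finset.range N, α t)) h1
  have hPexp : ∀ k, P k ≤ Real.exp (-(∑ i ∈ Finset.range k, α (N + i))) := by
    intro k
    have hneg : -(∑ i ∈ Finset.range k, α (N+i)) = ∑ i ∈ Finset.range k, (-(α (N+i))) := by
      simp
    rw [hneg, Real.exp_sum, hP]
    refine Finset.prod_le_prod (fun i _ => by linarith [hα1 (N+i)]) (fun i _ => ?_)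
    have := Real.add_one_le_exp (-(α (N+i)))
    linarith
  have hPtend : Tendsto P atTop (nhds 0) := by
    have hexp : Tendsto (fun k => Real.exp (-(∑ i ∈ Finset.range k, α (N + i)))) atTop (nhds 0) :=
      Real.tendsto_exp_atBot.comp (tendsto_neg_atTop_atBot.comp hSum)
    exact tendsto_of_tendsto_of_tendsto_of_le_of_le tendsto_const_nhds hexp hP0 hPexp
  have hPR : Tendsto (fun k => P k * R) atTop (nhds 0) := by
    simpa using hPtend.mul_const R
  obtain ⟨K, hK⟩ := eventually_atTop.mp (hPR.eventually_lt_const (by linarith : (0:ℝ) < ε / 2))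
  rw [eventually_atTop]
  refine ⟨N + K, fun t ht => ?_⟩
  have hk : K ≤ t - N := by omega
  have hNk : N + (t - N) = t := by omega
  have := claimA (t - N)
  have hPRk := hK _ hk
  rw [hNk] at this
  linarith

/-- Deterministic stochastic-approximation contraction: if
`Δ_{t+1} = (1-α_t)Δ_t + α_t F_t` with `α_t ∈ [0,1]`, `Σ α_t = ∞`,
`|F_t| ≤ γ|Δ_t| + c_t` with `γ ∈ [0,1)` and `c_t → 0`, and the `Δ_t` are uniformly
bounded, then `Δ_t → 0`. -/
theorem deterministic_sa_contraction
    (Δ F α c : ℕ → ℝ) (γ : ℝ)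
    (hrec : ∀ t, Δ (t + 1) = (1 - α t) * Δ t + α t * F t)
    (hα0 : ∀ t, 0 ≤ α t) (hα1 : ∀ t, α t ≤ 1)
    (hαdiv : Tendsto (fun T => ∑ t ∈ Finset.range T, α t) atTop atTop)
    (hγ0 : 0 ≤ γ) (hγ1 : γ < 1)
    (hF : ∀ t, |F t| ≤ γ * |Δ t| + c t)
    (hc : Tendsto c atTop (nhds 0))
    (hbound : ∃ B, ∀ t, |Δ t| ≤ B) :
    Tendsto Δ atTop (nhds 0) := by
  obtain ⟨B, hB⟩ := hbound
  have hB0 : 0 ≤ B := le_trans (abs_nonneg _) (hB 0)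
  have h1γ : 0 < 1 - γ := by linarith
  have main : ∀ ε > (0:ℝ), ∀ n : ℕ, ∀ᶠ t in atTop, |Δ t| ≤ γ ^ n * B + ε / (1 - γ) := by
    intro ε hε n
    induction n with
    | zero =>
      refine Eventually.of_forall fun t => ?_
      have : 0 ≤ ε / (1 - γ) := le_of_lt (div_pos hε h1γ)
      have := hB t
      simp only [pow_zero, one_mul]
      linarith
    | succ n ih =>
      have := sa_step_aux Δ F α c γ hrec hα0 hα1 hαdiv hγ0 hF hc _ ih hε
      refine this.mono fun t ht => ?_
      have heq : γ * (γ ^ n * B + ε / (1 - γ)) + ε = γ ^ (n+1) * B + ε / (1 - γ) := by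
        field_simp
        ring
      linarith [heq ▸ ht]
  rw [Metric.tendsto_atTop]
  intro δ hδ
  have hpow : Tendsto (fun n => γ ^ n * B) atTop (nhds 0) := by
    simpa using (tendsto_pow_atTop_nhds_zero_of_lt_one hγ0 hγ1).mul_const B
  obtain ⟨n, hn⟩ := (eventually_atTop.mp (hpow.eventually_lt_const (by linarith : (0:ℝ) < δ/2)))
  have hεpick : (0:ℝ) < δ/4 * (1 - γ) := by positivity
  have := main _ hεpick n
  obtain ⟨T, hT⟩ := eventually_atTop.mp this
  refine ⟨T, fun t ht => ?_⟩
  have h1 := hT t ht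
  have h2 := hn n le_rfl
  have h3 : δ/4 * (1 - γ) / (1 - γ) = δ/4 := by field_simp
  rw [h3] at h1
  simp only [Real.dist_eq, sub_zero]
  linarith
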